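/- The map sending (γ_{k+1}, t_k, γ_k, …, t_1, γ_1, x) to Γ(γ_{k+1}, t_k, γ_k, …, t_1, γ_1, x) ∈ X respects the equivalence relation ∼ defining MΓ; hence it descends to a well-defined retraction R : MΓ → X satisfying R([e,x]) = x. -/
import Mathlib


open scoped ENNReal

structure HomotopyCoherentAction (G : Type*) [Group G] (X : Type*) [TopologicalSpace X] where
  Γ : List (G × unitInterval) → G → X → X
  continuous' : ∀ (k : ℕ) (γ : Fin k → G) (γ₀ : G),
    Continuous fun p : (Fin k → unitInterval) × X =>
      Γ (List.ofFn fun i => (γ i, p.1 i)) γ₀ p.2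
  split : ∀ (L₁ L₂ : List (G × unitInterval)) (γ γ₀ : G) (x : X),
    Γ (L₁ ++ (γ, 0) :: L₂) γ₀ x = Γ L₁ γ (Γ L₂ γ₀ x)
  mul_mid : ∀ (L₁ L₂ : List (G × unitInterval)) (γ γ' : G) (t : unitInterval) (γ₀ : G) (x : X),
    Γ (L₁ ++ (γ, 1) :: (γ', t) :: L₂) γ₀ x = Γ (L₁ ++ (γ * γ', t) :: L₂) γ₀ x
  mul_last : ∀ (L₁ : List (G × unitInterval)) (γ γ₀ : G) (x : X),
    Γ (L₁ ++ [(γ, 1)]) γ₀ x = Γ L₁ (γ * γ₀) x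
  base_one : ∀ (L : List (G × unitInterval)) (γ₁ : G) (t₁ : unitInterval) (x : X),
    Γ (L ++ [(γ₁, t₁)]) 1 x = Γ L γ₁ x
  unit_mid : ∀ (L₁ L₂ : List (G × unitInterval)) (γ' : G) (t' t : unitInterval) (γ₀ : G) (x : X),
    Γ (L₁ ++ (γ', t') :: (1, t) :: L₂) γ₀ x = Γ (L₁ ++ (γ', t' * t) :: L₂) γ₀ x
  unit_head : ∀ (L : List (G × unitInterval)) (t : unitInterval) (γ₀ : G) (x : X),
    Γ ((1, t) :: L) γ₀ x = Γ L γ₀ x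
  unit_nil : ∀ x : X, Γ [] 1 x = x

variable {G : Type*} [Group G] {X : Type*}

/-- `Γ(r_k, t_k, …, r_1, t_1, r_0, z)` for `r : Fin (k+1) → G`, `t : Fin k → [0,1]`. -/
def gammaWord [TopologicalSpace X] (A : HomotopyCoherentAction G X) {k : ℕ}
    (r : Fin (k + 1) → G) (t : Fin k → unitInterval) (z : X) : X :=
  A.Γ ((List.ofFn fun j : Fin k => (r j.succ, t j)).reverse) (r 0) z

/-- Convert a point `(γ_{k+1}, [(t_k,γ_k),…,(t_1,γ_1)], x)` of `⨿_k G^{k+1} × [0,1]^k × X`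
into the argument format of `Γ`: the list of pairs `[(γ_{k+1},t_k),…,(γ_2,t_1)]` and the
base element `γ_1`. -/
def shiftList {G : Type*} : G → List (unitInterval × G) → List (G × unitInterval) × G
  | γ, [] => ([], γ)
  | γ, (t, γ') :: L => ((γ, t) :: (shiftList γ' L).1, (shiftList γ' L).2)

/-- Evaluation `(γ_{k+1},t_k,γ_k,…,t_1,γ_1,x) ↦ Γ(γ_{k+1},t_k,γ_k,…,t_1,γ_1,x)` on
representatives of `MΓ`. -/
def Rval {G : Type*} [Group G] {X : Type*} [TopologicalSpace X]
    (A : HomotopyCoherentAction G X) (p : G × List (unitInterval × G) × X) : X :=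
  A.Γ (shiftList p.1 p.2.1).1 (shiftList p.1 p.2.1).2 p.2.2

/-- The equivalence relation generating the quotient `MΓ`; a point
`(γ_{k+1},t_k,γ_k,…,t_1,γ_1,x)` is represented as `(γ_{k+1}, [(t_k,γ_k),…,(t_1,γ_1)], x)`. -/
inductive MRel {G : Type*} [Group G] {X : Type*} [TopologicalSpace X]
    (A : HomotopyCoherentAction G X) :
    G × List (unitInterval × G) × X → G × List (unitInterval × G) × X → Prop
  | base_unit (γ : G) (L : List (unitInterval × G)) (t : unitInterval) (x : X) :
      MRel A (γ, L ++ [(t, (1 : G))], x) (γ, L, x)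
  | unit_mid (γ : G) (L₁ L₂ : List (unitInterval × G)) (t t' : unitInterval) (γ' : G) (x : X) :
      MRel A (γ, L₁ ++ (t, (1 : G)) :: (t', γ') :: L₂, x) (γ, L₁ ++ (t * t', γ') :: L₂, x)
  | param_one_mid (γ : G) (L₁ L₂ : List (unitInterval × G)) (t' : unitInterval)
      (γ' γᵢ : G) (x : X) :
      MRel A (γ, L₁ ++ (t', γ') :: ((1 : unitInterval), γᵢ) :: L₂, x)
        (γ, L₁ ++ (t', γ' * γᵢ) :: L₂, x)
  | param_one_head (γ γ' : G) (L : List (unitInterval × G)) (x : X) :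
      MRel A (γ, ((1 : unitInterval), γ') :: L, x) (γ * γ', L, x)
  | param_zero (γ γᵢ : G) (L₁ L₂ : List (unitInterval × G)) (x : X) :
      MRel A (γ, L₁ ++ ((0 : unitInterval), γᵢ) :: L₂, x) (γ, L₁, Rval A (γᵢ, L₂, x))

lemma shiftList_append {G : Type*} (γ : G) (L₁ L₂ : List (unitInterval × G)) :
    shiftList γ (L₁ ++ L₂) =
      ((shiftList γ L₁).1 ++ (shiftList (shiftList γ L₁).2 L₂).1,
        (shiftList (shiftList γ L₁).2 L₂).2) := by
  induction L₁ generalizing γ with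
  | nil => simp [shiftList]
  | cons a L ih =>
    obtain ⟨t, γ'⟩ := a
    simp [shiftList, ih γ']

/-- The map `(γ_{k+1},t_k,…,γ_1,x) ↦ Γ(γ_{k+1},t_k,…,γ_1,x)` respects the equivalence
relation defining `MΓ`, and hence descends to a well-defined retraction `R : MΓ → X`
satisfying `R([e,x]) = x`. -/
theorem Rval_descends {G : Type*} [Group G] {X : Type*} [TopologicalSpace X]
    (A : HomotopyCoherentAction G X) :
    (∀ p q : G × List (unitInterval × G) × X, MRel A p q → Rval A p = Rval A q) ∧
    ∃ R : Quot (MRel A) → X,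
      (∀ p, R (Quot.mk (MRel A) p) = Rval A p) ∧
      ∀ x : X, R (Quot.mk (MRel A) (1, [], x)) = x := by

  have key : ∀ p q : G × List (unitInterval × G) × X, MRel A p q → Rval A p = Rval A q := by
    intro p q h
    cases h with
    | base_unit γ L t x =>
        simp only [Rval, shiftList_append, shiftList]
        exact A.base_one _ _ _ _
    | unit_mid γ L₁ L₂ t t' γ' x =>
        simp only [Rval, shiftList_append, shiftList]
        exact A.unit_mid _ _ _ _ _ _ _
    | param_one_mid γ L₁ L₂ t' γ' γᵢ x =>
        cases L₂ with
        | nil =>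
            simp only [Rval, shiftList_append, shiftList]
            have := A.mul_last ((shiftList γ L₁).1 ++ [((shiftList γ L₁).2, t')]) γ' γᵢ x
            simpa using this
        | cons a R =>
            obtain ⟨t₀, γ₀⟩ := a
            simp only [Rval, shiftList_append, shiftList]
            have := A.mul_mid ((shiftList γ L₁).1 ++ [((shiftList γ L₁).2, t')])
              (shiftList γ₀ R).1 γ' γᵢ t₀ (shiftList γ₀ R).2 x
            simpa using this
    | param_one_head γ γ' L x =>
        cases L with
        | nil =>
            simp only [Rval, shiftList]
            have := A.mul_last ([] : List (G × unitInterval)) γ γ' x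
            simpa using this
        | cons a R =>
            obtain ⟨t₀, γ₀⟩ := a
            simp only [Rval, shiftList]
            have := A.mul_mid ([] : List (G × unitInterval)) (shiftList γ₀ R).1 γ γ' t₀
              (shiftList γ₀ R).2 x
            simpa using this
    | param_zero γ γᵢ L₁ L₂ x =>
        simp only [Rval, shiftList_append, shiftList]
        exact A.split _ _ _ _ _
  refine ⟨key, Quot.lift (Rval A) key, fun p => rfl, fun x => ?_⟩
  simpa [Rval, shiftList] using A.unit_nil x
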